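/- For d > 1, the classes C_T = δ_T^{d(|T|-1)-1}·δ_N^{d(n-|T|)-1}, indexed by subsets T ⊆ N with 2 ≤ |T|, pair with the divisor classes δ_S via an integer matrix which is, up to a global sign (-1)^{d(n-1)}, the identity matrix; in particular this pairing matrix is invertible over Z. -/
import Mathlib

namespace PairingAux

open Finset

variable {n d : ℕ} {R : Type*} [CommRing R]

def pd (δ : Finset (Fin n) → R) (m : Multiset (Finset (Fin n))) : R := (m.map δ).prod

lemma pd_add (δ : Finset (Fin n) → R) (m₁ m₂ : Multiset (Finset (Fin n))) :
    pd δ (m₁ + m₂) = pd δ m₁ * pd δ m₂ := by simp [pd]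

lemma pd_cons (δ : Finset (Fin n) → R) (a : Finset (Fin n)) (m : Multiset (Finset (Fin n))) :
    pd δ (a ::ₘ m) = δ a * pd δ m := by simp [pd]

lemma pd_replicate (δ : Finset (Fin n) → R) (k : ℕ) (a : Finset (Fin n)) :
    pd δ (Multiset.replicate k a) = δ a ^ k := by simp [pd, Multiset.map_replicate]

lemma pd_singleton (δ : Finset (Fin n) → R) (a : Finset (Fin n)) : pd δ {a} = δ a := by
  simp [pd]

lemma cons_eq {α : Type*} (a : α) (s : Multiset α) : a ::ₘ s = {a} + s :=
  (Multiset.singleton_add a s).symm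

lemma kill_cv (δ : Finset (Fin n) → R) (m mG mJ : Multiset (Finset (Fin n)))
    (U : Finset (Fin n)) (hdec : m = U ::ₘ (mG + mJ)) (hcv : δ U * pd δ mG = 0) :
    pd δ m = 0 := by
  rw [hdec, pd_cons, pd_add, ← mul_assoc, hcv, zero_mul]

section Main

variable (δ : Finset (Fin n) → R)
variable (hd : 2 ≤ d)
variable (hrel1 : ∀ S T : Finset (Fin n), 2 ≤ S.card → 2 ≤ T.card →
      (S ∩ T).Nonempty → S ∩ T ⊂ S → S ∩ T ⊂ T → δ S * δ T = 0)
variable (hrel2 : ∀ a b : Fin n, a ≠ b →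
      (∑ S ∈ Finset.univ.filter (fun S : Finset (Fin n) => a ∈ S ∧ b ∈ S), δ S) ^ d = 0)

include hrel1 in
lemma kill2 (m : Multiset (Finset (Fin n))) (X Y : Finset (Fin n))
    (hX : X ∈ m) (hY : Y ∈ m.erase X)
    (h2X : 2 ≤ X.card) (h2Y : 2 ≤ Y.card) (hmeet : (X ∩ Y).Nonempty)
    (hXY : ¬ X ⊆ Y) (hYX : ¬ Y ⊆ X) : pd δ m = 0 := by
  have h0 : δ X * δ Y = 0 := by
    refine hrel1 X Y h2X h2Y hmeet ?_ ?_
    · exact (Finset.inter_subset_left).ssubset_of_ne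
        (fun h => hXY (by rw [← Finset.inter_eq_left]; exact h))
    · exact (Finset.inter_subset_right).ssubset_of_ne
        (fun h => hYX (by rw [← Finset.inter_eq_right]; exact h))
  have hdec : m = X ::ₘ Y ::ₘ ((m.erase X).erase Y) := by
    rw [Multiset.cons_erase hY, Multiset.cons_erase hX]
  rw [hdec, pd_cons, pd_cons, ← mul_assoc, h0, zero_mul]

lemma sum_pow_expand (s : Finset (Finset (Fin n))) (k : ℕ) :
    (∑ U ∈ s, δ U) ^ k
      = ∑ f ∈ Fintype.piFinset (fun _ : Fin k => s), ∏ i, δ (f i) := by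
  rw [← Finset.prod_univ_sum]; simp

lemma prod_eq_pd (f : Fin d → Finset (Fin n)) :
    (∏ i, δ (f i)) = pd δ (Finset.univ.val.map f) := by
  simp [pd, Multiset.map_map, Finset.prod, Function.comp_def]

include hd hrel1 hrel2 in
theorem CVstar (B : Finset (Fin n)) (hB2 : 2 ≤ B.card) (hBne : B ≠ Finset.univ)
    (m : Multiset (Finset (Fin n))) (hm : ∀ W ∈ m, B ⊂ W)
    (hcard : d * (n - B.card) ≤ Multiset.card m) :
    δ B * pd δ m = 0 := by
  classical
  have hBn : B.card < n := by
    have h := Finset.card_lt_card (Finset.ssubset_univ_iff.mpr hBne)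
    simpa using h
  have hcard' : d ≤ Multiset.card m :=
    le_trans (Nat.le_mul_of_pos_right d (by omega)) hcard
  by_cases hcomp : ∀ X ∈ m, ∀ Y ∈ m, X ⊆ Y ∨ Y ⊆ X
  case neg =>
    push_neg at hcomp
    obtain ⟨X, hX, Y, hY, hXY, hYX⟩ := hcomp
    have hYne : Y ≠ X := fun h => hXY (h ▸ Finset.Subset.refl _)
    have h0 : pd δ m = 0 := by
      refine kill2 δ hrel1 m X Y hX ((Multiset.mem_erase_of_ne hYne).mpr hY) ?_ ?_ ?_ hXY hYX
      · exact le_trans hB2 (le_of_lt (Finset.card_lt_card (hm X hX)))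
      · exact le_trans hB2 (le_of_lt (Finset.card_lt_card (hm Y hY)))
      · obtain ⟨a, ha⟩ := Finset.card_pos.mp (show 0 < B.card by omega)
        exact ⟨a, Finset.mem_inter.mpr ⟨(hm X hX).subset ha, (hm Y hY).subset ha⟩⟩
    rw [h0, mul_zero]
  case pos =>
  have hm0 : m ≠ 0 := by
    intro h; rw [h] at hcard'; simp at hcard'; omega
  obtain ⟨V, hVf, hVmin⟩ := Finset.exists_min_image m.toFinset Finset.card
    (by rwa [Multiset.toFinset_nonempty])
  have hVm : V ∈ m := Multiset.mem_toFinset.mp hVf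
  have hVmin' : ∀ W ∈ m, V.card ≤ W.card := fun W hW => hVmin W (Multiset.mem_toFinset.mpr hW)
  have hBV : B ⊂ V := hm V hVm
  set μ := m.count V with hμdef
  set rest := m.filter (fun W => ¬ W = V) with hrestdef
  have hmdec : m = Multiset.replicate μ V + rest := by
    rw [hrestdef, hμdef]
    conv_lhs => rw [← Multiset.filter_add_not (fun W => W = V) m]
    congr 1
    rw [Multiset.filter_eq']
  have hrest_above : ∀ W ∈ rest, V ⊂ W := by
    intro W hW
    rw [hrestdef, Multiset.mem_filter] at hW
    obtain ⟨hWm, hWne⟩ := hW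
    rcases hcomp V hVm W hWm with h | h
    · exact h.ssubset_of_ne (fun he => hWne (he.symm))
    · exact absurd (Finset.eq_of_subset_of_card_le h (hVmin' W hWm)) hWne
  have hcards : Multiset.card m = μ + Multiset.card rest := by
    conv_lhs => rw [hmdec]
    simp
  have hμ1 : 1 ≤ μ := by
    rw [hμdef]
    exact Multiset.one_le_count_iff_mem.mpr hVm
  have hVn : V.card ≤ n := by
    have := Finset.card_le_univ V; simpa using this
  by_cases hc2 : V ≠ Finset.univ ∧ d * (n - V.card) ≤ Multiset.card rest
  · obtain ⟨hVne, hcnt⟩ := hc2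
    have hrec : δ V * pd δ rest = 0 :=
      CVstar V
        (le_trans hB2 (le_of_lt (Finset.card_lt_card hBV))) hVne rest hrest_above hcnt
    have hμs : μ = (μ - 1) + 1 := by omega
    conv_lhs => rw [hmdec, pd_add, pd_replicate, hμs]
    calc δ B * (δ V ^ (μ - 1 + 1) * pd δ rest)
        = (δ B * δ V ^ (μ - 1)) * (δ V * pd δ rest) := by ring
      _ = 0 := by rw [hrec, mul_zero]
  · -- case 3
    have hkey2 : d * (n - B.card) = d * (n - B.card - 1) + d := by
      have h1 : (n - B.card - 1) + 1 = n - B.card := by omega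
      calc d * (n - B.card) = d * ((n - B.card - 1) + 1) := by rw [h1]
        _ = d * (n - B.card - 1) + d := by rw [Nat.mul_succ]
    have hμd : d ≤ μ := by
      by_cases hVu : V = Finset.univ
      · have h0 : rest = 0 := by
          rw [Multiset.eq_zero_iff_forall_notMem]
          intro W hW
          have h1 := hrest_above W hW
          rw [hVu] at h1
          exact h1.not_subset (Finset.subset_univ W)
        rw [h0] at hcards
        simp at hcards
        omega
      · have hlt : Multiset.card rest < d * (n - V.card) := by
          by_contra hge
          exact hc2 ⟨hVu, by omega⟩
        have hVcard : B.card < V.card := Finset.card_lt_card hBV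
        have key : d * (n - V.card) ≤ d * (n - B.card - 1) :=
          Nat.mul_le_mul_left d (by omega)
        omega
    obtain ⟨a, ha⟩ := Finset.card_pos.mp (show 0 < B.card by omega)
    obtain ⟨b, hbV, hbB⟩ := Finset.exists_of_ssubset hBV
    have hab : a ≠ b := fun h => hbB (h ▸ ha)
    set mp := Multiset.replicate (μ - d) V + rest with hmpdef
    have hmdec2 : m = mp + Multiset.replicate d V := by
      have hrep : Multiset.replicate μ V
          = Multiset.replicate (μ - d) V + Multiset.replicate d V := by
        rw [← Multiset.replicate_add]; congr 1; omega
      rw [hmpdef]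
      conv_lhs => rw [hmdec]
      rw [hrep, add_right_comm]
    set live := Finset.univ.filter (fun S : Finset (Fin n) => a ∈ S ∧ b ∈ S) with hlive
    have hx : (∑ U ∈ live, δ U) ^ d = 0 := hrel2 a b hab
    have hexp : ∑ f ∈ Fintype.piFinset (fun _ : Fin d => live),
        (δ B * pd δ mp) * ∏ i, δ (f i) = 0 := by
      rw [← Finset.mul_sum, ← sum_pow_expand, hx, mul_zero]
    have hVlive : V ∈ live := by
      rw [hlive]; simp only [Finset.mem_filter]
      exact ⟨Finset.mem_univ _, hBV.subset ha, hbV⟩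
    have hmemV : (fun _ : Fin d => V) ∈ Fintype.piFinset (fun _ : Fin d => live) := by
      rw [Fintype.mem_piFinset]; intro i; exact hVlive
    have hd0 : 0 < d := by omega
    have hkill : ∀ f ∈ Fintype.piFinset (fun _ : Fin d => live),
        f ≠ (fun _ : Fin d => V) → (δ B * pd δ mp) * ∏ i, δ (f i) = 0 := by
      intro f hf hfne
      have hflive : ∀ i, a ∈ f i ∧ b ∈ f i := by
        intro i
        have h1 := (Fintype.mem_piFinset.mp hf) i
        rw [hlive, Finset.mem_filter] at h1
        exact h1.2
      have hfcard : ∀ i, 2 ≤ (f i).card := by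
        intro i
        have h1 : ({a, b} : Finset (Fin n)) ⊆ f i := by
          intro x hx'
          rcases Finset.mem_insert.mp hx' with h | h
          · exact h ▸ (hflive i).1
          · exact (Finset.mem_singleton.mp h) ▸ (hflive i).2
        calc 2 = ({a, b} : Finset (Fin n)).card := (Finset.card_pair hab).symm
          _ ≤ _ := Finset.card_le_card h1
      set L := Finset.univ.val.map f with hLdef
      have hLcard : Multiset.card L = d := by simp [hLdef]
      have hmemL : ∀ i, f i ∈ L := by
        intro i
        rw [hLdef]
        exact Multiset.mem_map_of_mem f (Finset.mem_val.mpr (Finset.mem_univ i))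
      have hLmem : ∀ W ∈ L, ∃ i, f i = W := by
        intro W hW
        rw [hLdef] at hW
        rcases Multiset.mem_map.mp hW with ⟨i, _, h⟩
        exact ⟨i, h⟩
      have hterm : (δ B * pd δ mp) * ∏ i, δ (f i) = pd δ (B ::ₘ (mp + L)) := by
        simp only [prod_eq_pd δ f, ← hLdef, pd_cons, pd_add, hmpdef]
        ring
      rw [hterm]
      set mt := B ::ₘ (mp + L) with hmtdef
      -- step 1 : B below every letter, else kill
      by_cases hBsub : ∀ i, B ⊆ f i
      case neg =>
        push_neg at hBsub
        obtain ⟨i, hiB⟩ := hBsub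
        refine kill2 δ hrel1 mt B (f i) (Multiset.mem_cons_self _ _) ?_ hB2 (hfcard i) ?_ hiB ?_
        · rw [hmtdef, Multiset.erase_cons_head]
          exact Multiset.mem_add.mpr (Or.inr (hmemL i))
        · exact ⟨a, Finset.mem_inter.mpr ⟨ha, (hflive i).1⟩⟩
        · intro hsub; exact hbB (hsub (hflive i).2)
      case pos =>
      have hBfi : ∀ i, B ⊂ f i := fun i =>
        (hBsub i).ssubset_of_ne (fun h => hbB (h ▸ (hflive i).2))
      have hallBX : ∀ X ∈ mp + L, B ⊂ X := by
        intro X hX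
        rcases Multiset.mem_add.mp hX with h | h
        · rw [hmpdef] at h
          rcases Multiset.mem_add.mp h with h' | h'
          · rw [Multiset.eq_of_mem_replicate h']; exact hBV
          · exact hBV.trans (hrest_above X h')
        · obtain ⟨i, hi⟩ := hLmem X h; exact hi ▸ hBfi i
      have hallcard : ∀ X ∈ mp + L, 2 ≤ X.card := fun X hX =>
        le_trans hB2 (le_of_lt (Finset.card_lt_card (hallBX X hX)))
      have hBnotin : ∀ X ∈ mp + L, X ≠ B := fun X hX h => (hallBX X hX).ne' h
      -- step 2 : pairwise comparability
      by_cases hcompL : ∀ X ∈ mp + L, ∀ Y ∈ mp + L, X ⊆ Y ∨ Y ⊆ X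
      case neg =>
        push_neg at hcompL
        obtain ⟨X, hX, Y, hY, h1, h2⟩ := hcompL
        have hYX : Y ≠ X := fun h => h1 (h ▸ Finset.Subset.refl _)
        refine kill2 δ hrel1 mt X Y ?_ ?_ (hallcard X hX) (hallcard Y hY) ?_ h1 h2
        · exact Multiset.mem_cons_of_mem hX
        · rw [hmtdef, Multiset.erase_cons_tail _ (Ne.symm (hBnotin X hX))]
          exact Multiset.mem_cons_of_mem ((Multiset.mem_erase_of_ne hYX).mpr hY)
        · obtain ⟨c, hc⟩ := Finset.card_pos.mp (show 0 < B.card by omega)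
          exact ⟨c, Finset.mem_inter.mpr ⟨(hallBX X hX).subset hc, (hallBX Y hY).subset hc⟩⟩
      case pos =>
      have hL0 : L.toFinset.Nonempty := by
        rw [Multiset.toFinset_nonempty]
        intro h
        rw [h] at hLcard
        simp at hLcard
        omega
      obtain ⟨Us, hUsf, hUsmin⟩ := Finset.exists_min_image L.toFinset Finset.card hL0
      have hUsL : Us ∈ L := Multiset.mem_toFinset.mp hUsf
      have hUsmin' : ∀ W ∈ L, Us.card ≤ W.card := fun W hW =>
        hUsmin W (Multiset.mem_toFinset.mpr hW)
      have hUsadd : Us ∈ mp + L := Multiset.mem_add.mpr (Or.inr hUsL)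
      have hUsub : ∀ X ∈ L, Us ⊆ X := by
        intro X hX
        rcases hcompL Us hUsadd X (Multiset.mem_add.mpr (Or.inr hX)) with h | h
        · exact h
        · rw [Finset.eq_of_subset_of_card_le h (hUsmin' X hX)]
      by_cases hVsub : ∀ i, V ⊆ f i
      · -- middle case: recursion with smaller weight
        have hne' : ∃ i₀, f i₀ ≠ V := by
          by_contra hcc; push_neg at hcc; exact hfne (funext hcc)
        obtain ⟨i₀, hi₀⟩ := hne'
        have hVneu : V ≠ Finset.univ := by
          intro hVu
          apply hi₀
          exact Finset.Subset.antisymm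
            (by rw [hVu]; exact Finset.subset_univ _) (hVsub i₀)
        have hVsn : V.card < n := by
          have h := Finset.card_lt_card (Finset.ssubset_univ_iff.mpr hVneu)
          simpa using h
        have hcard'' : d * (n - B.card) ≤ Multiset.card (mp + L) := by
          have h1 : Multiset.card mp = (μ - d) + Multiset.card rest := by
            rw [hmpdef]; simp
          rw [Multiset.card_add, hLcard]
          omega
        have hΦ : ((mp + L).map (fun W => n - W.card)).sum
            < (m.map (fun W => n - W.card)).sum := by
          have hm' : (m.map (fun W => n - W.card)).sum
              = ((mp.map (fun W => n - W.card)).sum) + d * (n - V.card) := by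
            conv_lhs => rw [hmdec2]
            rw [Multiset.map_add, Multiset.sum_add, Multiset.map_replicate,
              Multiset.sum_replicate, smul_eq_mul]
          have hLsum : (L.map (fun W => n - W.card)).sum = ∑ i : Fin d, (n - (f i).card) := by
            rw [hLdef, Multiset.map_map]
            rfl
          have hL' : (L.map (fun W => n - W.card)).sum < d * (n - V.card) := by
            rw [hLsum]
            calc ∑ i : Fin d, (n - (f i).card) < ∑ _i : Fin d, (n - V.card) := by
                  apply Finset.sum_lt_sum
                  · intro i _
                    have := Finset.card_le_card (hVsub i)
                    omega
                  · refine ⟨i₀, Finset.mem_univ _, ?_⟩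
                    have h1 : V ⊂ f i₀ := (hVsub i₀).ssubset_of_ne (fun h => hi₀ h.symm)
                    have h2 := Finset.card_lt_card h1
                    have h3 : (f i₀).card ≤ n := by
                      have := Finset.card_le_univ (f i₀); simpa using this
                    omega
              _ = d * (n - V.card) := by
                  rw [Finset.sum_const, Finset.card_univ]
                  simp [smul_eq_mul]
          rw [Multiset.map_add, Multiset.sum_add]
          omega
        have hrec := CVstar B hB2 hBne (mp + L) hallBX hcard''
        rw [pd_cons]
        exact hrec
      · -- kill at the minimal letter
        push_neg at hVsub
        obtain ⟨i₁, hi₁⟩ := hVsub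
        have hUsfi : Us ⊆ f i₁ := hUsub _ (hmemL i₁)
        have hUsV : ¬ V ⊆ Us := fun h => hi₁ (h.trans hUsfi)
        have hUsne : Us ≠ Finset.univ := fun h =>
          hi₁ ((Finset.subset_univ V).trans (h ▸ hUsfi))
        have hBUs : B ⊂ Us := by
          obtain ⟨i, hi⟩ := hLmem Us hUsL
          exact hi ▸ hBfi i
        have habove : ∀ X ∈ mp, Us ⊂ X := by
          intro X hX
          have hXadd : X ∈ mp + L := Multiset.mem_add.mpr (Or.inl hX)
          rw [hmpdef] at hX
          rcases Multiset.mem_add.mp hX with h' | h'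
          · have hXV : X = V := Multiset.eq_of_mem_replicate h'
            subst hXV
            rcases hcompL X hXadd Us hUsadd with h | h
            · exact absurd h hUsV
            · exact h.ssubset_of_ne (fun he => hUsV (he ▸ Finset.Subset.refl _))
          · have hVX : V ⊂ X := hrest_above X h'
            rcases hcompL X hXadd Us hUsadd with h | h
            · exact absurd (hVX.subset.trans h) hUsV
            · exact h.ssubset_of_ne (fun he => hUsV (he ▸ hVX.subset))
        have hdec : mt = Us ::ₘ (mp + (B ::ₘ L.erase Us)) := by
          rw [hmtdef]
          conv_lhs => rw [← Multiset.cons_erase hUsL]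
          rw [Multiset.add_cons, Multiset.add_cons, Multiset.cons_swap]
        refine kill_cv δ mt mp (B ::ₘ L.erase Us) Us hdec ?_
        have hcount : d * (n - Us.card) ≤ Multiset.card mp := by
          have h1 : Multiset.card mp = (μ - d) + Multiset.card rest := by
            rw [hmpdef]; simp
          have hUc : B.card < Us.card := Finset.card_lt_card hBUs
          have hUn : Us.card ≤ n := by
            have := Finset.card_le_univ Us; simpa using this
          have key : d * (n - Us.card) ≤ d * (n - B.card - 1) :=
            Nat.mul_le_mul_left d (by omega)
          omega
        exact CVstar Us (le_trans hB2 (le_of_lt (Finset.card_lt_card hBUs))) hUsne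
          mp habove hcount
    have hsingle := Finset.sum_eq_single_of_mem _ hmemV hkill
    rw [hsingle] at hexp
    calc δ B * pd δ m = (δ B * pd δ mp) * ∏ _i : Fin d, δ V := by
          conv_lhs => rw [hmdec2]
          rw [pd_add, pd_replicate, Finset.prod_const, Finset.card_univ, Fintype.card_fin]
          ring
      _ = 0 := hexp
  termination_by (n - B.card, (m.map (fun W => n - W.card)).sum)
  decreasing_by
  · apply Prod.Lex.left
    have := Finset.card_lt_card hBV
    omega
  · apply Prod.Lex.right
    exact hΦ
  · apply Prod.Lex.left
    have := Finset.card_lt_card hBUs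
    omega


include hd hrel1 hrel2 in
theorem DL (S T : Finset (Fin n)) (h2S : 2 ≤ S.card) (h2T : 2 ≤ T.card)
    (hdisj : Disjoint S T) :
    δ S * (δ T * δ Finset.univ ^ (d * (n + 1 - S.card - T.card))) = 0 := by
  classical
  obtain ⟨a, ha⟩ := Finset.card_pos.mp (show 0 < S.card by omega)
  obtain ⟨b, hb⟩ := Finset.card_pos.mp (show 0 < T.card by omega)
  have haT : a ∉ T := Finset.disjoint_left.mp hdisj ha
  have hbS : b ∉ S := fun h => (Finset.disjoint_left.mp hdisj h) hb
  have hab : a ≠ b := fun h => haT (h ▸ hb)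
  have hstn : S.card + T.card ≤ n := by
    have h1 := Finset.card_le_univ (S ∪ T)
    rw [Finset.card_union_of_disjoint hdisj] at h1
    simpa using h1
  set m0 := d * (n + 1 - S.card - T.card) with hm0def
  have hdm0 : d ≤ m0 := Nat.le_mul_of_pos_right d (by omega)
  set k := m0 - d with hkdef
  set mp := {S} + ({T} + Multiset.replicate k Finset.univ) with hmpdef
  have hSmp : S ∈ mp := by rw [hmpdef]; simp
  have hTmp : T ∈ mp := by rw [hmpdef]; simp
  set live := Finset.univ.filter (fun W : Finset (Fin n) => a ∈ W ∧ b ∈ W) with hlive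
  have hexp : ∑ f ∈ Fintype.piFinset (fun _ : Fin d => live),
      pd δ mp * ∏ i, δ (f i) = 0 := by
    rw [← Finset.mul_sum, ← sum_pow_expand, hrel2 a b hab, mul_zero]
  have hUlive : (Finset.univ : Finset (Fin n)) ∈ live := by
    rw [hlive]; simp
  have hmemU : (fun _ : Fin d => (Finset.univ : Finset (Fin n)))
      ∈ Fintype.piFinset (fun _ : Fin d => live) := by
    rw [Fintype.mem_piFinset]; intro i; exact hUlive
  have hkill : ∀ f ∈ Fintype.piFinset (fun _ : Fin d => live),
      f ≠ (fun _ : Fin d => (Finset.univ : Finset (Fin n))) →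
      pd δ mp * ∏ i, δ (f i) = 0 := by
    intro f hf hfne
    have hflive : ∀ i, a ∈ f i ∧ b ∈ f i := by
      intro i
      have h1 := (Fintype.mem_piFinset.mp hf) i
      rw [hlive, Finset.mem_filter] at h1
      exact h1.2
    have hfcard : ∀ i, 2 ≤ (f i).card := by
      intro i
      have h1 : ({a, b} : Finset (Fin n)) ⊆ f i := by
        intro x hx'
        rcases Finset.mem_insert.mp hx' with h | h
        · exact h ▸ (hflive i).1
        · exact (Finset.mem_singleton.mp h) ▸ (hflive i).2
      calc 2 = ({a, b} : Finset (Fin n)).card := (Finset.card_pair hab).symm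
        _ ≤ _ := Finset.card_le_card h1
    set L := Finset.univ.val.map f with hLdef
    have hLcard : Multiset.card L = d := by simp [hLdef]
    have hmemL : ∀ i, f i ∈ L := by
      intro i
      rw [hLdef]
      exact Multiset.mem_map_of_mem f (Finset.mem_val.mpr (Finset.mem_univ i))
    have hLmem : ∀ W ∈ L, ∃ i, f i = W := by
      intro W hW
      rw [hLdef] at hW
      rcases Multiset.mem_map.mp hW with ⟨i, _, h⟩
      exact ⟨i, h⟩
    have hterm : pd δ mp * ∏ i, δ (f i) = pd δ (mp + L) := by
      rw [prod_eq_pd δ f, ← hLdef, pd_add δ mp L]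
    rw [hterm]
    set mt := mp + L with hmtdef
    have hfneS : ∀ i, f i ≠ S := fun i h => hbS (h ▸ (hflive i).2)
    have hfneT : ∀ i, f i ≠ T := fun i h => haT (h ▸ (hflive i).1)
    by_cases hSsub : ∀ i, S ⊆ f i
    case neg =>
      push_neg at hSsub
      obtain ⟨i, hiS⟩ := hSsub
      refine kill2 δ hrel1 mt S (f i) (Multiset.mem_add.mpr (Or.inl hSmp))
        ((Multiset.mem_erase_of_ne (hfneS i)).mpr (Multiset.mem_add.mpr (Or.inr (hmemL i))))
        h2S (hfcard i) ⟨a, Finset.mem_inter.mpr ⟨ha, (hflive i).1⟩⟩ hiS ?_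
      intro hsub; exact hbS (hsub (hflive i).2)
    case pos =>
    by_cases hTsub : ∀ i, T ⊆ f i
    case neg =>
      push_neg at hTsub
      obtain ⟨i, hiT⟩ := hTsub
      refine kill2 δ hrel1 mt T (f i) (Multiset.mem_add.mpr (Or.inl hTmp))
        ((Multiset.mem_erase_of_ne (hfneT i)).mpr (Multiset.mem_add.mpr (Or.inr (hmemL i))))
        h2T (hfcard i) ⟨b, Finset.mem_inter.mpr ⟨hb, (hflive i).2⟩⟩ hiT ?_
      intro hsub; exact haT (hsub (hflive i).1)
    case pos =>
    by_cases hcompL : ∀ X ∈ L, ∀ Y ∈ L, X ⊆ Y ∨ Y ⊆ X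
    case neg =>
      push_neg at hcompL
      obtain ⟨X, hX, Y, hY, h1, h2⟩ := hcompL
      have hYX : Y ≠ X := fun h => h1 (h ▸ Finset.Subset.refl _)
      obtain ⟨iX, hiX⟩ := hLmem X hX
      obtain ⟨iY, hiY⟩ := hLmem Y hY
      refine kill2 δ hrel1 mt X Y (Multiset.mem_add.mpr (Or.inr hX))
        ((Multiset.mem_erase_of_ne hYX).mpr (Multiset.mem_add.mpr (Or.inr hY)))
        (hiX ▸ hfcard iX) (hiY ▸ hfcard iY)
        ⟨a, Finset.mem_inter.mpr ⟨hiX ▸ (hflive iX).1, hiY ▸ (hflive iY).1⟩⟩ h1 h2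
    case pos =>
    have hL0 : L.toFinset.Nonempty := by
      rw [Multiset.toFinset_nonempty]
      intro h; rw [h] at hLcard; simp at hLcard; omega
    obtain ⟨Us, hUsf, hUsmin⟩ := Finset.exists_min_image L.toFinset Finset.card hL0
    have hUsL : Us ∈ L := Multiset.mem_toFinset.mp hUsf
    have hUsub : ∀ X ∈ L, Us ⊆ X := by
      intro X hX
      rcases hcompL Us hUsL X hX with h | h
      · exact h
      · rw [Finset.eq_of_subset_of_card_le h (hUsmin X (Multiset.mem_toFinset.mpr hX))]
    have hne' : ∃ i₀, f i₀ ≠ Finset.univ := by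
      by_contra hcc; push_neg at hcc; exact hfne (funext hcc)
    obtain ⟨i₀, hi₀⟩ := hne'
    have hUsne : Us ≠ Finset.univ := by
      intro h
      apply hi₀
      exact Finset.Subset.antisymm (Finset.subset_univ _) (h ▸ hUsub _ (hmemL i₀))
    obtain ⟨iU, hiU⟩ := hLmem Us hUsL
    have hSTUs : S ∪ T ⊆ Us := by
      rw [← hiU]
      exact Finset.union_subset (hSsub iU) (hTsub iU)
    have hUscard : S.card + T.card ≤ Us.card := by
      calc S.card + T.card = (S ∪ T).card := (Finset.card_union_of_disjoint hdisj).symm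
        _ ≤ Us.card := Finset.card_le_card hSTUs
    have h2Us : 2 ≤ Us.card := hiU ▸ hfcard iU
    have hL' : L = {Us} + L.erase Us := by
      rw [Multiset.singleton_add, Multiset.cons_erase hUsL]
    have hdec : mt = Us ::ₘ (Multiset.replicate k Finset.univ
        + ({S} + ({T} + L.erase Us))) := by
      rw [← Multiset.singleton_add, hmtdef, hmpdef]
      conv_lhs => rw [hL']
      abel
    refine kill_cv δ mt _ _ Us hdec ?_
    have habove : ∀ W ∈ Multiset.replicate k (Finset.univ : Finset (Fin n)),
        Us ⊂ W := by
      intro W hW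
      rw [Multiset.eq_of_mem_replicate hW]
      exact Finset.ssubset_univ_iff.mpr hUsne
    have hcount : d * (n - Us.card)
        ≤ Multiset.card (Multiset.replicate k (Finset.univ : Finset (Fin n))) := by
      rw [Multiset.card_replicate]
      have hUn : Us.card ≤ n := by
        have := Finset.card_le_univ Us; simpa using this
      have key : d * (n - Us.card) ≤ d * (n - S.card - T.card) :=
        Nat.mul_le_mul_left d (by omega)
      have key2 : m0 = d * (n - S.card - T.card) + d := by
        rw [hm0def]
        have h1 : n + 1 - S.card - T.card = (n - S.card - T.card) + 1 := by omega
        rw [h1, Nat.mul_succ]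
      omega
    exact CVstar δ hd hrel1 hrel2 Us h2Us hUsne _ habove hcount
  have hsingle := Finset.sum_eq_single_of_mem _ hmemU hkill
  rw [hsingle] at hexp
  have hfin : δ S * (δ T * δ Finset.univ ^ m0)
      = pd δ mp * ∏ _i : Fin d, δ (Finset.univ : Finset (Fin n)) := by
    rw [hmpdef]
    simp only [pd_add, pd_replicate, pd_singleton, Finset.prod_const, Finset.card_univ,
      Fintype.card_fin]
    rw [show m0 = k + d from by omega, pow_add]
    ring
  rw [hfin, hexp]

include hd hrel1 hrel2 in
theorem LX (t : ℕ) (T : Finset (Fin n)) (hTt : T.card = t) (ht2 : 2 ≤ t) (htn : t < n)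
    (j : ℕ) (hj1 : 1 ≤ j) (hjt : j < t)
    (U : ℕ → Finset (Fin n))
    (hUc : ∀ i, 1 ≤ i → i ≤ j → (U i).card = i)
    (hUmono : ∀ i, 1 ≤ i → i < j → U i ⊆ U (i + 1))
    (hUT : U j ⊆ T) :
    (∏ i ∈ Finset.Icc 2 j, δ (U i) ^ d)
        * (δ T ^ (d * (t - j)) * δ Finset.univ ^ (d * (n - t) - 1))
      = (-1 : R) ^ j * δ Finset.univ ^ (d * (n - 1) - 1) := by
  classical
  have hT2 : 2 ≤ T.card := by rw [hTt]; exact ht2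
  have hTne : T ≠ Finset.univ := by
    intro h
    rw [h] at hTt
    simp [Finset.card_univ] at hTt
    omega
  have hchain : ∀ i i', 1 ≤ i → i ≤ i' → i' ≤ j → U i ⊆ U i' := by
    intro i i' hi hii' hi'j
    induction i', hii' using Nat.le_induction with
    | base => exact Finset.Subset.refl _
    | succ k hk ih => exact (ih (by omega)).trans (hUmono k (by omega) (by omega))
  obtain ⟨a, haU1⟩ := Finset.card_eq_one.mp (hUc 1 le_rfl (by omega))
  have haUi : ∀ i, 1 ≤ i → i ≤ j → a ∈ U i := by
    intro i h1 h2
    exact hchain 1 i le_rfl h1 h2 (by rw [haU1]; exact Finset.mem_singleton_self a)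
  have haT : a ∈ T := hUT (haUi j hj1 le_rfl)
  have hUjT : U j ⊂ T := by
    refine Finset.ssubset_iff_subset_ne.mpr ⟨hUT, ?_⟩
    intro h
    have h1 := hUc j hj1 le_rfl
    rw [h, hTt] at h1
    omega
  obtain ⟨b, hbT, hbUj⟩ := Finset.exists_of_ssubset hUjT
  have hab : a ≠ b := fun h => hbUj (h ▸ haUi j hj1 le_rfl)
  set V := insert b (U j) with hVdef
  have hVcard : V.card = j + 1 := by
    rw [hVdef, Finset.card_insert_of_notMem hbUj, hUc j hj1 le_rfl]
  have hUjV : U j ⊆ V := Finset.subset_insert b (U j)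
  have hVT : V ⊆ T := Finset.insert_subset hbT hUT
  have haV : a ∈ V := Finset.mem_insert_of_mem (haUi j hj1 le_rfl)
  have hbV : b ∈ V := Finset.mem_insert_self b (U j)
  have hV2 : 2 ≤ V.card := by omega
  have hVne : V ≠ Finset.univ := by
    intro h
    have := Finset.card_le_card hVT
    rw [h] at this
    simp [Finset.card_univ] at this
    omega
  set q := d * (t - j - 1) with hqdef
  set r := d * (n - t) - 1 with hrdef
  have hdnt : 1 ≤ d * (n - t) := Nat.one_le_iff_ne_zero.mpr
    (Nat.mul_ne_zero (by omega) (by omega))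
  have hr1 : r + 1 = d * (n - t) := by omega
  have hqd : q + d = d * (t - j) := by
    have h1 : (t - j - 1) + 1 = t - j := by omega
    calc q + d = d * ((t - j - 1) + 1) := by rw [hqdef, Nat.mul_succ]
      _ = d * (t - j) := by rw [h1]
  have hqr1 : q + r + 1 = d * (n - j - 1) := by
    have h2 : (t - j - 1) + (n - t) = n - j - 1 := by omega
    have h3 : q + d * (n - t) = d * (n - j - 1) := by
      rw [hqdef, ← Nat.mul_add, h2]
    omega
  set mflag := (Finset.Icc 2 j).val.bind (fun i => Multiset.replicate d (U i)) with hmflagdef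
  have hpdflag : pd δ mflag = ∏ i ∈ Finset.Icc 2 j, δ (U i) ^ d := by
    rw [hmflagdef, pd, Multiset.map_bind, Multiset.prod_bind, Finset.prod_eq_multiset_prod]
    congr 1
    apply Multiset.map_congr rfl
    intro x _
    rw [Multiset.map_replicate, Multiset.prod_replicate]
  have hmemflag : ∀ l, 2 ≤ l → l ≤ j → U l ∈ mflag := by
    intro l h2 hlj
    rw [hmflagdef]
    rw [Multiset.mem_bind]
    exact ⟨l, Finset.mem_val.mpr (Finset.mem_Icc.mpr ⟨h2, hlj⟩),
      Multiset.mem_replicate.mpr ⟨by omega, rfl⟩⟩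
  have helemflag : ∀ X ∈ mflag, ∃ l, 2 ≤ l ∧ l ≤ j ∧ X = U l := by
    intro X hX
    rw [hmflagdef, Multiset.mem_bind] at hX
    obtain ⟨l, hl, hX⟩ := hX
    rw [Finset.mem_val, Finset.mem_Icc] at hl
    exact ⟨l, hl.1, hl.2, Multiset.eq_of_mem_replicate hX⟩
  set mp := mflag + (Multiset.replicate q T + Multiset.replicate r Finset.univ) with hmpdef
  have hpdmp : pd δ mp = (∏ i ∈ Finset.Icc 2 j, δ (U i) ^ d) * (δ T ^ q * δ Finset.univ ^ r) := by
    rw [hmpdef, pd_add, pd_add, pd_replicate, pd_replicate, hpdflag]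
  set live := Finset.univ.filter (fun W : Finset (Fin n) => a ∈ W ∧ b ∈ W) with hlive
  have hexp : ∑ f ∈ Fintype.piFinset (fun _ : Fin d => live),
      pd δ mp * ∏ i, δ (f i) = 0 := by
    rw [← Finset.mul_sum, ← sum_pow_expand, hrel2 a b hab, mul_zero]
  have hTlive : T ∈ live := by
    rw [hlive]; simp only [Finset.mem_filter]; exact ⟨Finset.mem_univ _, haT, hbT⟩
  have hVlive : V ∈ live := by
    rw [hlive]; simp only [Finset.mem_filter]; exact ⟨Finset.mem_univ _, haV, hbV⟩
  have hNlive : (Finset.univ : Finset (Fin n)) ∈ live := by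
    rw [hlive]; simp
  have hmemT : (fun _ : Fin d => T) ∈ Fintype.piFinset (fun _ : Fin d => live) := by
    rw [Fintype.mem_piFinset]; intro i; exact hTlive
  have hmemN : (fun _ : Fin d => (Finset.univ : Finset (Fin n)))
      ∈ Fintype.piFinset (fun _ : Fin d => live) := by
    rw [Fintype.mem_piFinset]; intro i; exact hNlive
  have htermT : pd δ mp * ∏ _i : Fin d, δ T
      = (∏ i ∈ Finset.Icc 2 j, δ (U i) ^ d)
        * (δ T ^ (d * (t - j)) * δ Finset.univ ^ r) := by
    rw [hpdmp, Finset.prod_const, Finset.card_univ, Fintype.card_fin, ← hqd, pow_add]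
    ring
  have hkillN : 1 ≤ q → pd δ mp * ∏ _i : Fin d, δ (Finset.univ : Finset (Fin n)) = 0 := by
    intro hq1
    have h1 : pd δ mp * ∏ _i : Fin d, δ (Finset.univ : Finset (Fin n))
        = pd δ (mp + Multiset.replicate d Finset.univ) := by
      rw [pd_add δ mp, pd_replicate, Finset.prod_const, Finset.card_univ, Fintype.card_fin]
    rw [h1]
    have hrepq : Multiset.replicate q T = {T} + Multiset.replicate (q - 1) T := by
      rw [Multiset.singleton_add]
      conv_lhs => rw [show q = (q - 1) + 1 from by omega]
      rw [Multiset.replicate_succ]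
    have hdec : mp + Multiset.replicate d Finset.univ
        = T ::ₘ (Multiset.replicate (r + d) Finset.univ
            + (mflag + Multiset.replicate (q - 1) T)) := by
      rw [hmpdef, hrepq, cons_eq, Multiset.replicate_add]
      abel
    refine kill_cv δ _ _ _ T hdec ?_
    refine CVstar δ hd hrel1 hrel2 T hT2 hTne _ ?_ ?_
    · intro W hW
      rw [Multiset.eq_of_mem_replicate hW]
      exact Finset.ssubset_univ_iff.mpr hTne
    · rw [Multiset.card_replicate, hTt]
      omega
  have hkillA : ∀ f ∈ Fintype.piFinset (fun _ : Fin d => live),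
      f ≠ (fun _ : Fin d => T) → f ≠ (fun _ : Fin d => V) →
      f ≠ (fun _ : Fin d => (Finset.univ : Finset (Fin n))) →
      pd δ mp * ∏ i, δ (f i) = 0 := by
    intro f hf hfneT hfneV hfneN
    have hflive : ∀ i, a ∈ f i ∧ b ∈ f i := by
      intro i
      have h1 := (Fintype.mem_piFinset.mp hf) i
      rw [hlive, Finset.mem_filter] at h1
      exact h1.2
    have hfcard : ∀ i, 2 ≤ (f i).card := by
      intro i
      have h1 : ({a, b} : Finset (Fin n)) ⊆ f i := by
        intro x hx'
        rcases Finset.mem_insert.mp hx' with h | h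
        · exact h ▸ (hflive i).1
        · exact (Finset.mem_singleton.mp h) ▸ (hflive i).2
      calc 2 = ({a, b} : Finset (Fin n)).card := (Finset.card_pair hab).symm
        _ ≤ _ := Finset.card_le_card h1
    set L := Finset.univ.val.map f with hLdef
    have hLcard : Multiset.card L = d := by simp [hLdef]
    have hmemL : ∀ i, f i ∈ L := by
      intro i
      rw [hLdef]
      exact Multiset.mem_map_of_mem f (Finset.mem_val.mpr (Finset.mem_univ i))
    have hLmem : ∀ W ∈ L, ∃ i, f i = W := by
      intro W hW
      rw [hLdef] at hW
      rcases Multiset.mem_map.mp hW with ⟨i, _, h⟩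
      exact ⟨i, h⟩
    have hterm : pd δ mp * ∏ i, δ (f i) = pd δ (mp + L) := by
      rw [prod_eq_pd δ f, ← hLdef, pd_add δ mp L]
    rw [hterm]
    set mt := mp + L with hmtdef
    by_cases hUsubf : ∀ i, ∀ l, 2 ≤ l → l ≤ j → U l ⊆ f i
    case neg =>
      push_neg at hUsubf
      obtain ⟨i, l, hl2, hlj, hnsub⟩ := hUsubf
      have hbUl : b ∉ U l := fun h => hbUj (hchain l j (by omega) hlj le_rfl h)
      have hfiUl : f i ≠ U l := fun h => hbUl (h ▸ (hflive i).2)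
      refine kill2 δ hrel1 mt (U l) (f i)
        (Multiset.mem_add.mpr (Or.inl (Multiset.mem_add.mpr (Or.inl (hmemflag l hl2 hlj)))))
        ((Multiset.mem_erase_of_ne hfiUl).mpr (Multiset.mem_add.mpr (Or.inr (hmemL i))))
        (by rw [hUc l (by omega) hlj]; omega) (hfcard i)
        ⟨a, Finset.mem_inter.mpr ⟨haUi l (by omega) hlj, (hflive i).1⟩⟩ hnsub ?_
      intro hsub
      exact hbUl (hsub (hflive i).2)
    case pos =>
    have hVsubf : ∀ i, V ⊆ f i := by
      intro i
      rw [hVdef]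
      refine Finset.insert_subset (hflive i).2 ?_
      rcases Nat.lt_or_ge j 2 with hj | hj
      · have hj1' : j = 1 := by omega
        rw [hj1', haU1]
        simp only [Finset.singleton_subset_iff]
        exact (hflive i).1
      · exact hUsubf i j hj le_rfl
    by_cases hcompL : ∀ X ∈ L, ∀ Y ∈ L, X ⊆ Y ∨ Y ⊆ X
    case neg =>
      push_neg at hcompL
      obtain ⟨X, hX, Y, hY, h1, h2⟩ := hcompL
      have hYX : Y ≠ X := fun h => h1 (h ▸ Finset.Subset.refl _)
      obtain ⟨iX, hiX⟩ := hLmem X hX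
      obtain ⟨iY, hiY⟩ := hLmem Y hY
      refine kill2 δ hrel1 mt X Y (Multiset.mem_add.mpr (Or.inr hX))
        ((Multiset.mem_erase_of_ne hYX).mpr (Multiset.mem_add.mpr (Or.inr hY)))
        (hiX ▸ hfcard iX) (hiY ▸ hfcard iY)
        ⟨a, Finset.mem_inter.mpr ⟨hiX ▸ (hflive iX).1, hiY ▸ (hflive iY).1⟩⟩ h1 h2
    case pos =>
    by_cases hcompT : ∀ i, f i ⊆ T ∨ T ⊆ f i
    case neg =>
      push_neg at hcompT
      obtain ⟨i, h1, h2⟩ := hcompT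
      have hq1 : 1 ≤ q := by
        by_contra hq0
        have hjt1 : t - j - 1 = 0 := by
          have hq0' : q = 0 := by omega
          rcases Nat.mul_eq_zero.mp (hqdef ▸ hq0') with h | h
          · omega
          · exact h
        have hVT' : V = T := Finset.eq_of_subset_of_card_le hVT (by omega)
        exact h2 (hVT' ▸ hVsubf i)
      have hfiT : f i ≠ T := fun h => h2 (le_of_eq h.symm)
      refine kill2 δ hrel1 mt T (f i)
        (Multiset.mem_add.mpr (Or.inl (Multiset.mem_add.mpr (Or.inr (Multiset.mem_add.mpr
          (Or.inl (Multiset.mem_replicate.mpr ⟨by omega, rfl⟩)))))))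
        ((Multiset.mem_erase_of_ne hfiT).mpr (Multiset.mem_add.mpr (Or.inr (hmemL i))))
        hT2 (hfcard i) ⟨a, Finset.mem_inter.mpr ⟨haT, (hflive i).1⟩⟩ h2 h1
    case pos =>
    have hL0 : L.toFinset.Nonempty := by
      rw [Multiset.toFinset_nonempty]
      intro h; rw [h] at hLcard; simp at hLcard; omega
    obtain ⟨Us, hUsf, hUsmin⟩ := Finset.exists_min_image L.toFinset Finset.card hL0
    have hUsL : Us ∈ L := Multiset.mem_toFinset.mp hUsf
    have hUsub : ∀ X ∈ L, Us ⊆ X := by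
      intro X hX
      rcases hcompL Us hUsL X hX with h | h
      · exact h
      · rw [Finset.eq_of_subset_of_card_le h (hUsmin X (Multiset.mem_toFinset.mpr hX))]
    obtain ⟨iU, hiU⟩ := hLmem Us hUsL
    have hVUs : V ⊆ Us := hiU ▸ hVsubf iU
    have h2Us : 2 ≤ Us.card := hiU ▸ hfcard iU
    have hUsabove : ∀ X ∈ L, X ≠ Us → Us ⊂ X := by
      intro X hX hne
      exact (hUsub X hX).ssubset_of_ne (Ne.symm hne)
    have hLsplit1 : L = {Us} + L.erase Us := by
      rw [Multiset.singleton_add, Multiset.cons_erase hUsL]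
    by_cases hUsT2 : Us = T
    · -- minimal letter is T
      have hne2 : ∃ i₂, f i₂ ≠ Us := by
        by_contra hcc; push_neg at hcc
        exact hfneT (funext (fun i => (hcc i).trans hUsT2))
      obtain ⟨i₂, hi₂⟩ := hne2
      have hfi₂ : Us ⊂ f i₂ := hUsabove _ (hmemL i₂) hi₂
      have hfi₂mem : f i₂ ∈ L.erase Us := (Multiset.mem_erase_of_ne hi₂).mpr (hmemL i₂)
      have hLsplit : L = {Us} + ({f i₂} + (L.erase Us).erase (f i₂)) := by
        rw [Multiset.singleton_add, Multiset.singleton_add,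
          Multiset.cons_erase hfi₂mem, Multiset.cons_erase hUsL]
      have hdec : mt = Us ::ₘ (({f i₂} + Multiset.replicate r Finset.univ)
          + (mflag + Multiset.replicate q T + (L.erase Us).erase (f i₂))) := by
        rw [cons_eq, hmtdef, hmpdef]
        conv_lhs => rw [hLsplit]
        abel
      refine kill_cv δ mt _ _ Us hdec ?_
      refine CVstar δ hd hrel1 hrel2 Us h2Us (by rw [hUsT2]; exact hTne) _ ?_ ?_
      · intro W hW
        rcases Multiset.mem_add.mp hW with h | h
        · rw [Multiset.mem_singleton.mp h]; exact hfi₂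
        · obtain ⟨hr0, hWu⟩ := Multiset.mem_replicate.mp h
          rw [hWu, hUsT2]
          exact Finset.ssubset_univ_iff.mpr hTne
      · simp only [Multiset.card_add, Multiset.card_singleton, Multiset.card_replicate]
        rw [hUsT2, hTt]
        omega
    · by_cases hUsV : Us = V
      · -- minimal letter is V (and V ≠ T)
        have hne2 : ∃ i₂, f i₂ ≠ Us := by
          by_contra hcc; push_neg at hcc
          exact hfneV (funext (fun i => (hcc i).trans hUsV))
        obtain ⟨i₂, hi₂⟩ := hne2
        have hfi₂ : Us ⊂ f i₂ := hUsabove _ (hmemL i₂) hi₂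
        have hfi₂mem : f i₂ ∈ L.erase Us := (Multiset.mem_erase_of_ne hi₂).mpr (hmemL i₂)
        have hLsplit : L = {Us} + ({f i₂} + (L.erase Us).erase (f i₂)) := by
          rw [Multiset.singleton_add, Multiset.singleton_add,
            Multiset.cons_erase hfi₂mem, Multiset.cons_erase hUsL]
        have hdec : mt = Us ::ₘ (({f i₂} + (Multiset.replicate q T
            + Multiset.replicate r Finset.univ))
            + (mflag + (L.erase Us).erase (f i₂))) := by
          rw [cons_eq, hmtdef, hmpdef]
          conv_lhs => rw [hLsplit]
          abel
        refine kill_cv δ mt _ _ Us hdec ?_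
        refine CVstar δ hd hrel1 hrel2 Us h2Us (by rw [hUsV]; exact hVne) _ ?_ ?_
        · intro W hW
          rcases Multiset.mem_add.mp hW with h | h
          · rw [Multiset.mem_singleton.mp h]; exact hfi₂
          · rcases Multiset.mem_add.mp h with h' | h'
            · obtain ⟨hq0, hWT⟩ := Multiset.mem_replicate.mp h'
              rw [hWT, hUsV]
              refine Finset.ssubset_iff_subset_ne.mpr ⟨hVT, ?_⟩
              intro hVTeq
              have hne0 : t - j - 1 ≠ 0 := by
                intro h0
                exact hq0 (by rw [hqdef, h0, Nat.mul_zero])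
              have hc := hVcard
              rw [hVTeq, hTt] at hc
              omega
            · obtain ⟨hr0, hWu⟩ := Multiset.mem_replicate.mp h'
              rw [hWu, hUsV]
              exact Finset.ssubset_univ_iff.mpr hVne
        · simp only [Multiset.card_add, Multiset.card_singleton, Multiset.card_replicate]
          rw [hUsV, hVcard, show n - (j + 1) = n - j - 1 from by omega]
          omega
      · -- minimal letter is neither T nor V
        have hVUs' : V ⊂ Us := Finset.ssubset_iff_subset_ne.mpr ⟨hVUs, fun h => hUsV h.symm⟩
        have hUn : Us.card ≤ n := by
          have := Finset.card_le_univ Us; simpa using this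
        rcases hcompT iU with hcase | hcase
        · -- Us ⊂ T
          have hUsT : Us ⊆ T := by rw [← hiU]; exact hcase
          have hUsT' : Us ⊂ T := Finset.ssubset_iff_subset_ne.mpr ⟨hUsT, hUsT2⟩
          have hUscard : j + 2 ≤ Us.card := by
            have := Finset.card_lt_card hVUs'
            omega
          have hUsneu : Us ≠ Finset.univ := by
            intro h
            rw [h] at hUsT'
            exact hUsT'.not_subset (Finset.subset_univ T)
          have hdec : mt = Us ::ₘ ((Multiset.replicate q T + Multiset.replicate r Finset.univ)
              + (mflag + L.erase Us)) := by
            rw [cons_eq, hmtdef, hmpdef]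
            conv_lhs => rw [hLsplit1]
            abel
          refine kill_cv δ mt _ _ Us hdec ?_
          refine CVstar δ hd hrel1 hrel2 Us h2Us hUsneu _ ?_ ?_
          · intro W hW
            rcases Multiset.mem_add.mp hW with h | h
            · obtain ⟨hq0, hWT⟩ := Multiset.mem_replicate.mp h
              rw [hWT]; exact hUsT'
            · obtain ⟨hr0, hWu⟩ := Multiset.mem_replicate.mp h
              rw [hWu]
              exact Finset.ssubset_univ_iff.mpr hUsneu
          · simp only [Multiset.card_add, Multiset.card_replicate]
            have key : d * (n - Us.card) ≤ d * (n - j - 2) := Nat.mul_le_mul_left d (by omega)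
            have key2 : d * (n - j - 1) = d * (n - j - 2) + d := by
              have h1 : (n - j - 2) + 1 = n - j - 1 := by omega
              calc d * (n - j - 1) = d * ((n - j - 2) + 1) := by rw [h1]
                _ = d * (n - j - 2) + d := by rw [Nat.mul_succ]
            omega
        · -- T ⊆ Us, Us ≠ T, so T ⊂ Us
          have hTUs : T ⊆ Us := by rw [← hiU]; exact hcase
          have hTUs' : T ⊂ Us := Finset.ssubset_iff_subset_ne.mpr ⟨hTUs, fun h => hUsT2 h.symm⟩
          by_cases hUsuniv : Us = Finset.univ
          · exfalso
            apply hfneN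
            funext i
            exact Finset.univ_subset_iff.mp (by rw [← hUsuniv]; exact hUsub _ (hmemL i))
          · have hdec : mt = Us ::ₘ (Multiset.replicate r Finset.univ
                + (mflag + Multiset.replicate q T + L.erase Us)) := by
              rw [cons_eq, hmtdef, hmpdef]
              conv_lhs => rw [hLsplit1]
              abel
            refine kill_cv δ mt _ _ Us hdec ?_
            refine CVstar δ hd hrel1 hrel2 Us h2Us hUsuniv _ ?_ ?_
            · intro W hW
              obtain ⟨hr0, hWu⟩ := Multiset.mem_replicate.mp hW
              rw [hWu]
              exact Finset.ssubset_univ_iff.mpr hUsuniv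
            · rw [Multiset.card_replicate]
              have hUst1 : t + 1 ≤ Us.card := by
                have := Finset.card_lt_card hTUs'
                omega
              have key : d * (n - Us.card) ≤ d * (n - t - 1) := Nat.mul_le_mul_left d (by omega)
              have key2 : d * (n - t) = d * (n - t - 1) + d := by
                have h1 : (n - t - 1) + 1 = n - t := by omega
                calc d * (n - t) = d * ((n - t - 1) + 1) := by rw [h1]
                  _ = d * (n - t - 1) + d := by rw [Nat.mul_succ]
              omega
  -- assemble
  by_cases hjt1 : j + 1 < t
  · -- survivors : constant T and constant V
    have hTV : T ≠ V := by
      intro h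
      have hc := hVcard
      rw [← h, hTt] at hc
      omega
    have hfTV : (fun _ : Fin d => T) ≠ (fun _ : Fin d => V) := by
      intro h
      exact hTV (congrFun h ⟨0, by omega⟩)
    have hmemVpi : (fun _ : Fin d => V) ∈ Fintype.piFinset (fun _ : Fin d => live) := by
      rw [Fintype.mem_piFinset]; intro i; exact hVlive
    have hq1 : 1 ≤ q := by
      have h1 : d * 1 ≤ d * (t - j - 1) := Nat.mul_le_mul_left d (by omega)
      omega
    have hpair : ({(fun _ : Fin d => T), (fun _ : Fin d => V)} :
        Finset (Fin d → Finset (Fin n))) ⊆ Fintype.piFinset (fun _ : Fin d => live) := by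
      intro g hg
      rcases Finset.mem_insert.mp hg with h | h
      · rw [h]; exact hmemT
      · rw [Finset.mem_singleton.mp h]; exact hmemVpi
    have hzero : ∀ g ∈ Fintype.piFinset (fun _ : Fin d => live),
        g ∉ ({(fun _ : Fin d => T), (fun _ : Fin d => V)} :
          Finset (Fin d → Finset (Fin n))) →
        pd δ mp * ∏ i, δ (g i) = 0 := by
      intro g hg hgne
      rw [Finset.mem_insert, Finset.mem_singleton] at hgne
      push_neg at hgne
      by_cases hgN : g = (fun _ : Fin d => (Finset.univ : Finset (Fin n)))
      · rw [hgN]; exact hkillN hq1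
      · exact hkillA g hg hgne.1 hgne.2 hgN
    have hsum2 := Finset.sum_subset hpair hzero
    rw [← hsum2, Finset.sum_pair hfTV] at hexp
    set U' := Function.update U (j + 1) V with hU'def
    have hU'le : ∀ i, i ≤ j → U' i = U i := by
      intro i hi
      rw [hU'def, Function.update_of_ne (by omega)]
    have hU'j1 : U' (j + 1) = V := by rw [hU'def, Function.update_self]
    have hrecv := LX t T hTt ht2 htn (j + 1) (by omega) (by omega) U'
      (by
        intro i h1 h2
        rcases Nat.lt_or_ge i (j + 1) with h | h
        · rw [hU'le i (by omega)]
          exact hUc i h1 (by omega)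
        · have hij : i = j + 1 := by omega
          rw [hij, hU'j1]
          exact hVcard)
      (by
        intro i h1 h2
        rcases Nat.lt_or_ge i j with h | h
        · rw [hU'le i (by omega), hU'le (i + 1) (by omega)]
          exact hUmono i h1 h
        · have hij : i = j := by omega
          rw [hij, hU'le j le_rfl, hU'j1]
          exact hUjV)
      (by rw [hU'j1]; exact hVT)
    have hprodsucc : (∏ i ∈ Finset.Icc 2 (j + 1), δ (U' i) ^ d)
        = (∏ i ∈ Finset.Icc 2 j, δ (U i) ^ d) * δ V ^ d := by
      rw [Finset.prod_Icc_succ_top (by omega : 2 ≤ j + 1)]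
      congr 1
      · apply Finset.prod_congr rfl
        intro i hi
        rw [hU'le i (Finset.mem_Icc.mp hi).2]
      · rw [hU'j1]
    have hq' : d * (t - (j + 1)) = q := by
      rw [hqdef, show t - (j + 1) = t - j - 1 from by omega]
    rw [hprodsucc, hq'] at hrecv
    have htermV : pd δ mp * ∏ _i : Fin d, δ V
        = (-1 : R) ^ (j + 1) * δ Finset.univ ^ (d * (n - 1) - 1) := by
      rw [hpdmp, Finset.prod_const, Finset.card_univ, Fintype.card_fin]
      rw [← hrecv]
      ring
    rw [htermT, htermV] at hexp
    have hfin := eq_neg_of_add_eq_zero_left hexp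
    rw [hfin, pow_succ]
    ring
  · -- j + 1 = t : survivors are constant T and constant univ
    have hjt2 : j + 1 = t := by omega
    have hVT' : V = T := Finset.eq_of_subset_of_card_le hVT (by omega)
    have hq0 : q = 0 := by
      rw [hqdef, show t - j - 1 = 0 from by omega, Nat.mul_zero]
    have hTN : (fun _ : Fin d => T) ≠ (fun _ : Fin d => (Finset.univ : Finset (Fin n))) := by
      intro h
      exact hTne (congrFun h ⟨0, by omega⟩)
    have hpair : ({(fun _ : Fin d => T), (fun _ : Fin d => (Finset.univ : Finset (Fin n)))} :
        Finset (Fin d → Finset (Fin n))) ⊆ Fintype.piFinset (fun _ : Fin d => live) := by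
      intro g hg
      rcases Finset.mem_insert.mp hg with h | h
      · rw [h]; exact hmemT
      · rw [Finset.mem_singleton.mp h]; exact hmemN
    have hzero : ∀ g ∈ Fintype.piFinset (fun _ : Fin d => live),
        g ∉ ({(fun _ : Fin d => T), (fun _ : Fin d => (Finset.univ : Finset (Fin n)))} :
          Finset (Fin d → Finset (Fin n))) →
        pd δ mp * ∏ i, δ (g i) = 0 := by
      intro g hg hgne
      rw [Finset.mem_insert, Finset.mem_singleton] at hgne
      push_neg at hgne
      refine hkillA g hg hgne.1 ?_ hgne.2
      rw [hVT']
      exact hgne.1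
    have hsum2 := Finset.sum_subset hpair hzero
    rw [← hsum2, Finset.sum_pair hTN] at hexp
    have htermN : pd δ mp * ∏ _i : Fin d, δ (Finset.univ : Finset (Fin n))
        = (-1 : R) ^ (j - 1) * δ Finset.univ ^ (d * (n - 1) - 1) := by
      rw [hpdmp, Finset.prod_const, Finset.card_univ, Fintype.card_fin, hq0, pow_zero]
      by_cases ht3 : t = 2
      · have hj1' : j = 1 := by omega
        have hIcc : Finset.Icc 2 j = (∅ : Finset ℕ) := by
          rw [hj1']
          exact Finset.Icc_eq_empty (by omega)
        rw [hIcc, Finset.prod_empty, hj1']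
        have hrd : r + d = d * (n - 1) - 1 := by
          have h3 : (n - t) + 1 = n - 1 := by omega
          have h4 : d * ((n - t) + 1) = d * (n - t) + d := by
            rw [Nat.mul_add, Nat.mul_one]
          rw [← h3, h4]
          omega
        rw [← hrd, pow_add, show (1:ℕ) - 1 = 0 from rfl, pow_zero]
        ring
      · have hj2 : 2 ≤ j := by omega
        have hrecv := LX (t - 1) (U j) (by rw [hUc j hj1 le_rfl]; omega) (by omega) (by omega)
          (j - 1) (by omega) (by omega) U
          (fun i h1 h2 => hUc i h1 (by omega))
          (fun i h1 h2 => hUmono i h1 (by omega))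
          (by
            have hmj := hUmono (j - 1) (by omega) (by omega)
            rwa [show j - 1 + 1 = j from by omega] at hmj)
        have h1 : (t - 1) - (j - 1) = 1 := by omega
        have h2 : d * (n - (t - 1)) - 1 = r + d := by
          have h3 : (n - t) + 1 = n - (t - 1) := by omega
          have h4 : d * (n - (t - 1)) = d * (n - t) + d := by
            rw [← h3, Nat.mul_succ]
          omega
        rw [h1, Nat.mul_one, h2] at hrecv
        have hsplit : (∏ i ∈ Finset.Icc 2 j, δ (U i) ^ d)
            = (∏ i ∈ Finset.Icc 2 (j - 1), δ (U i) ^ d) * δ (U j) ^ d := by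
          conv_lhs => rw [show j = (j - 1) + 1 from by omega]
          rw [Finset.prod_Icc_succ_top (by omega : 2 ≤ (j - 1) + 1),
            show j - 1 + 1 = j from by omega]
        rw [← hrecv, hsplit, pow_add]
        ring
    rw [htermT, htermN] at hexp
    have hfin := eq_neg_of_add_eq_zero_left hexp
    have hsign : ((-1 : R)) ^ j = (-1 : R) ^ (j - 1) * (-1) := by
      conv_lhs => rw [show j = (j - 1) + 1 from by omega]
      rw [pow_succ]
    rw [hfin, hsign]
    ring
  termination_by (t, t - j)
  decreasing_by
  · apply Prod.Lex.right
    omega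
  · apply Prod.Lex.left
    omega

include hd hrel1 hrel2 in
theorem entry (S T : Finset (Fin n)) (h2S : 2 ≤ S.card) (hSne : S ≠ Finset.univ)
    (h2T : 2 ≤ T.card) (hTne : T ≠ Finset.univ) :
    δ S * (δ T ^ (d * (T.card - 1) - 1) * δ Finset.univ ^ (d * (n - T.card) - 1))
      = if S = T then -(δ Finset.univ ^ (d * (n - 1) - 1)) else 0 := by
  classical
  have hsn : S.card < n := by
    have h := Finset.card_lt_card (Finset.ssubset_univ_iff.mpr hSne)
    simpa using h
  have htn : T.card < n := by
    have h := Finset.card_lt_card (Finset.ssubset_univ_iff.mpr hTne)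
    simpa using h
  have hdt1 : 1 ≤ d * (T.card - 1) :=
    Nat.one_le_iff_ne_zero.mpr (Nat.mul_ne_zero (by omega) (by omega))
  have hdt2 : 2 ≤ d * (T.card - 1) := by
    have h1 : 2 * 1 ≤ d * (T.card - 1) := Nat.mul_le_mul (by omega) (by omega)
    omega
  have hdnt : 1 ≤ d * (n - T.card) :=
    Nat.one_le_iff_ne_zero.mpr (Nat.mul_ne_zero (by omega) (by omega))
  by_cases hST : S = T
  · rw [if_pos hST, hST]
    obtain ⟨a0, ha0⟩ := Finset.card_pos.mp (show 0 < T.card by omega)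
    have hkey : δ T ^ (d * (T.card - 1)) * δ Finset.univ ^ (d * (n - T.card) - 1)
        = -(δ Finset.univ ^ (d * (n - 1) - 1)) := by
      have hLX := LX δ hd hrel1 hrel2 T.card T rfl h2T htn 1 le_rfl (by omega)
        (fun _ => {a0})
        (by
          intro i h1 h2
          have : i = 1 := by omega
          rw [this]
          simp)
        (by intro i h1 h2; omega)
        (by simpa using ha0)
      rw [Finset.Icc_eq_empty (by omega), Finset.prod_empty, one_mul, pow_one,
        neg_one_mul] at hLX
      exact hLX
    obtain ⟨e, he⟩ : ∃ e, d * (T.card - 1) - 1 = e := ⟨_, rfl⟩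
    calc δ T * (δ T ^ (d * (T.card - 1) - 1) * δ Finset.univ ^ (d * (n - T.card) - 1))
        = δ T ^ (d * (T.card - 1)) * δ Finset.univ ^ (d * (n - T.card) - 1) := by
          rw [he, show d * (T.card - 1) = e + 1 from by omega, pow_succ]
          ring
      _ = -(δ Finset.univ ^ (d * (n - 1) - 1)) := hkey
  · rw [if_neg hST]
    have hA : d * (T.card - 1) + d * (n - T.card) = d * (n - 1) := by
      rw [← Nat.mul_add, show (T.card - 1) + (n - T.card) = n - 1 from by omega]
    by_cases hsub1 : S ⊂ T
    · have hcv := CVstar δ hd hrel1 hrel2 S h2S hSne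
        (Multiset.replicate (d * (T.card - 1) - 1) T
          + Multiset.replicate (d * (n - T.card) - 1) Finset.univ)
        (by
          intro W hW
          rcases Multiset.mem_add.mp hW with h | h
          · rw [Multiset.eq_of_mem_replicate h]; exact hsub1
          · rw [Multiset.eq_of_mem_replicate h]
            exact Finset.ssubset_univ_iff.mpr hSne)
        (by
          rw [Multiset.card_add, Multiset.card_replicate, Multiset.card_replicate]
          have hB : d * (n - S.card) ≤ d * (n - 2) := Nat.mul_le_mul_left d (by omega)
          have hC : d * (n - 1) = d * (n - 2) + d := by
            rw [show n - 1 = (n - 2) + 1 from by omega, Nat.mul_succ]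
          omega)
      rw [pd_add, pd_replicate, pd_replicate] at hcv
      exact hcv
    · by_cases hsub2 : T ⊂ S
      · have hcv := CVstar δ hd hrel1 hrel2 T h2T hTne
          ({S} + Multiset.replicate (d * (n - T.card) - 1) Finset.univ)
          (by
            intro W hW
            rcases Multiset.mem_add.mp hW with h | h
            · rw [Multiset.mem_singleton.mp h]; exact hsub2
            · rw [Multiset.eq_of_mem_replicate h]
              exact Finset.ssubset_univ_iff.mpr hTne)
          (by
            rw [Multiset.card_add, Multiset.card_singleton, Multiset.card_replicate]
            omega)
        rw [pd_add, pd_singleton, pd_replicate] at hcv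
        obtain ⟨e, he⟩ : ∃ e, d * (T.card - 1) - 1 - 1 = e := ⟨_, rfl⟩
        calc δ S * (δ T ^ (d * (T.card - 1) - 1) * δ Finset.univ ^ (d * (n - T.card) - 1))
            = δ T ^ e
                * (δ T * (δ S * δ Finset.univ ^ (d * (n - T.card) - 1))) := by
              rw [show d * (T.card - 1) - 1 = e + 1 from by omega, pow_succ]
              ring
          _ = 0 := by rw [hcv, mul_zero]
      · by_cases hdisj : Disjoint S T
        · have hDL := DL δ hd hrel1 hrel2 S T h2S h2T hdisj
          have hstn : S.card + T.card ≤ n := by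
            have h1 := Finset.card_le_univ (S ∪ T)
            rw [Finset.card_union_of_disjoint hdisj] at h1
            simpa using h1
          have hA2 : d * (n + 1 - S.card - T.card) + d * (S.card - 1) = d * (n - T.card) := by
            rw [← Nat.mul_add,
              show (n + 1 - S.card - T.card) + (S.card - 1) = n - T.card from by omega]
          have hB2 : 2 ≤ d * (S.card - 1) := by
            have h1 : 2 * 1 ≤ d * (S.card - 1) := Nat.mul_le_mul (by omega) (by omega)
            omega
          obtain ⟨e, he⟩ : ∃ e, d * (T.card - 1) - 1 - 1 = e := ⟨_, rfl⟩
          obtain ⟨c, hc⟩ : ∃ c, d * (S.card - 1) - 1 = c := ⟨_, rfl⟩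
          calc δ S * (δ T ^ (d * (T.card - 1) - 1) * δ Finset.univ ^ (d * (n - T.card) - 1))
              = (δ T ^ e * δ Finset.univ ^ c)
                  * (δ S * (δ T * δ Finset.univ ^ (d * (n + 1 - S.card - T.card)))) := by
                rw [show d * (T.card - 1) - 1 = e + 1 from by omega,
                  show d * (n - T.card) - 1
                    = c + d * (n + 1 - S.card - T.card) from by omega,
                  pow_succ, pow_add]
                ring
            _ = 0 := by rw [hDL, mul_zero]
        · have hint : (S ∩ T).Nonempty := Finset.not_disjoint_iff_nonempty_inter.mp hdisj
          have h0 : δ S * δ T = 0 := by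
            refine hrel1 S T h2S h2T hint ?_ ?_
            · refine (Finset.inter_subset_left).ssubset_of_ne ?_
              intro h
              rw [Finset.inter_eq_left] at h
              exact hsub1 (Finset.ssubset_iff_subset_ne.mpr ⟨h, hST⟩)
            · refine (Finset.inter_subset_right).ssubset_of_ne ?_
              intro h
              rw [Finset.inter_eq_right] at h
              exact hsub2 (Finset.ssubset_iff_subset_ne.mpr ⟨h, fun he => hST he.symm⟩)
          obtain ⟨e, he⟩ : ∃ e, d * (T.card - 1) - 1 - 1 = e := ⟨_, rfl⟩
          calc δ S * (δ T ^ (d * (T.card - 1) - 1) * δ Finset.univ ^ (d * (n - T.card) - 1))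
              = (δ S * δ T) * (δ T ^ e
                  * δ Finset.univ ^ (d * (n - T.card) - 1)) := by
                rw [show d * (T.card - 1) - 1 = e + 1 from by omega, pow_succ]
                ring
            _ = 0 := by rw [h0, zero_mul]

end Main

end PairingAux


/-- For `d > 1`, the pairing matrix between the boundary divisor classes `δ_S` and the
one-cycles `C_T = δ_T^{d(|T|-1)-1} · δ_N^{d(n-|T|)-1}` is `(-1)^{d(n-1)}` times the
identity matrix; in particular it is invertible over `ℤ`. -/
theorem pairing_matrix_identity (d n : ℕ) (hd : 1 < d) (hn : 2 ≤ n)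
    {R : Type*} [CommRing R] (δ : Finset (Fin n) → R)
    (hrel1 : ∀ S T : Finset (Fin n), 2 ≤ S.card → 2 ≤ T.card →
      (S ∩ T).Nonempty → S ∩ T ⊂ S → S ∩ T ⊂ T → δ S * δ T = 0)
    (hrel2 : ∀ a b : Fin n, a ≠ b →
      (∑ S ∈ Finset.univ.filter (fun S : Finset (Fin n) => a ∈ S ∧ b ∈ S), δ S) ^ d = 0)
    (deg : R →+ ℤ)
    (hdeg : deg (δ Finset.univ ^ (d * (n - 1) - 1)) = (-1 : ℤ) ^ (d * (n - 1) - 1))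
    (M : Matrix {S : Finset (Fin n) // 2 ≤ S.card ∧ S ≠ Finset.univ}
                {S : Finset (Fin n) // 2 ≤ S.card ∧ S ≠ Finset.univ} ℤ)
    (hM : ∀ S T, M S T =
      deg (δ S.1 * (δ T.1 ^ (d * (T.1.card - 1) - 1) *
        δ Finset.univ ^ (d * (n - T.1.card) - 1)))) :
    M = ((-1 : ℤ) ^ (d * (n - 1))) • (1 : Matrix _ _ ℤ) ∧ IsUnit M.det := by
  classical
  have hd2 : 2 ≤ d := hd
  have hentry : ∀ (S T : {S : Finset (Fin n) // 2 ≤ S.card ∧ S ≠ Finset.univ}),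
      M S T = (if S = T then ((-1 : ℤ) ^ (d * (n - 1))) else 0) := by
    intro S T
    rw [hM]
    rw [PairingAux.entry δ hd2 hrel1 hrel2 S.1 T.1 S.2.1 S.2.2 T.2.1 T.2.2]
    by_cases hST : S.1 = T.1
    · rw [if_pos hST, if_pos (Subtype.ext hST), map_neg, hdeg]
      have h1 : 1 ≤ d * (n - 1) :=
        Nat.one_le_iff_ne_zero.mpr (Nat.mul_ne_zero (by omega) (by omega))
      obtain ⟨e, he⟩ : ∃ e, d * (n - 1) - 1 = e := ⟨_, rfl⟩
      rw [he, show d * (n - 1) = e + 1 from by omega, pow_succ]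
      ring
    · rw [if_neg hST, if_neg (fun h => hST (congrArg Subtype.val h)), map_zero]
  have hMeq : M = ((-1 : ℤ) ^ (d * (n - 1))) • (1 : Matrix _ _ ℤ) := by
    ext S T
    rw [hentry, Matrix.smul_apply, Matrix.one_apply]
    by_cases h : S = T <;> simp [h]
  refine ⟨hMeq, ?_⟩
  rw [hMeq, Matrix.det_smul, Matrix.det_one, mul_one]
  exact (((isUnit_one (M := ℤ)).neg).pow _).pow _
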